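/- For all n ≥ 2, C_{2n-1} - ∑_{i=2}^{n} C_{2n-2i+1} * 2 * C_{2i-3} = 2^{2n-1} * C_{n-1} - C_{2n-1}, where C_m denotes the m-th Catalan number. -/

import Mathlib

open Finset

/-- Integer Catalan recursion: `(m+2)·C_{m+1} = 2(2m+1)·C_m`. -/
private lemma cat_rec (m : ℕ) :
    ((m : ℤ) + 2) * catalan (m + 1) = 2 * (2 * m + 1) * catalan m := by
  have h1 : ((m : ℤ) + 1 + 1) * catalan (m + 1) = Nat.centralBinom (m + 1) := by
    exact_mod_cast congrArg (Nat.cast : ℕ → ℤ) (succ_mul_catalan_eq_centralBinom (m + 1))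
  have h2 : ((m : ℤ) + 1) * Nat.centralBinom (m + 1)
      = 2 * (2 * m + 1) * Nat.centralBinom m := by
    exact_mod_cast congrArg (Nat.cast : ℕ → ℤ) (Nat.succ_mul_centralBinom_succ m)
  have h3 : ((m : ℤ) + 1) * catalan m = Nat.centralBinom m := by
    exact_mod_cast congrArg (Nat.cast : ℕ → ℤ) (succ_mul_catalan_eq_centralBinom m)
  have hm : ((m : ℤ) + 1) ≠ 0 := by positivity
  apply mul_left_cancel₀ hm
  linear_combination ((m : ℤ) + 1) * h1 + h2 - 2 * (2 * (m : ℤ) + 1) * h3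

/-- Two-step recursion: `(2m+2)(2m+3)·C_{2m+2} = 4(4m+1)(4m+3)·C_{2m}`. -/
private lemma cat_rec2 (m : ℕ) :
    (2 * (m : ℤ) + 2) * (2 * m + 3) * catalan (2 * m + 2)
      = 4 * (4 * m + 1) * (4 * m + 3) * catalan (2 * m) := by
  have h1 := cat_rec (2 * m + 1)
  have h2 := cat_rec (2 * m)
  push_cast at h1 h2 ⊢
  have e1 : 2 * m + 1 + 1 = 2 * m + 2 := by ring
  rw [e1] at h1
  linear_combination (2 * (m : ℤ) + 2) * h1 + 2 * (4 * (m : ℤ) + 3) * h2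

/-- Certificate polynomial for the telescoping. -/
private def Pz (n j : ℕ) : ℤ :=
  (j : ℤ) * (4 * (j : ℤ) ^ 2 - 6 * (j : ℤ) * ((n : ℤ) + 1) - (3 * (n : ℤ) + 4))

/-- The WZ-style single step, with `k = n - j` made explicit. -/
private lemma step (j k : ℕ) :
    Pz (j + k) (j + 1) * (catalan (2 * j + 2) * catalan (2 * k))
      - Pz (j + k) j * (catalan (2 * j) * catalan (2 * k + 2))
    = (((j : ℤ) + k + 1) * (2 * ((j : ℤ) + k) + 3) * (((j : ℤ) + k) + 2))
        * (catalan (2 * j) * catalan (2 * k + 2))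
      - (((j : ℤ) + k + 1) * (2 * ((j : ℤ) + k) + 3) * (8 * (2 * ((j : ℤ) + k) + 1)))
        * (catalan (2 * j) * catalan (2 * k)) := by
  have hj := cat_rec2 j
  have hk := cat_rec2 k
  have hc : ((2 * (j : ℤ) + 2) * (2 * j + 3) * ((2 * (k : ℤ) + 2) * (2 * k + 3))) ≠ 0 := by
    positivity
  apply mul_left_cancel₀ hc
  simp only [Pz]
  push_cast
  linear_combination
    ((((j : ℤ) + 1) * (4 * ((j : ℤ) + 1) ^ 2 - 6 * ((j : ℤ) + 1) * ((j : ℤ) + (k : ℤ) + 1)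
        - (3 * ((j : ℤ) + (k : ℤ)) + 4)))
      * ((2 * (k : ℤ) + 2) * (2 * k + 3)) * (catalan (2 * k) : ℤ)) * hj
    - (((j : ℤ) * (4 * (j : ℤ) ^ 2 - 6 * (j : ℤ) * ((j : ℤ) + (k : ℤ) + 1)
          - (3 * ((j : ℤ) + (k : ℤ)) + 4))
        + ((j : ℤ) + k + 1) * (2 * ((j : ℤ) + k) + 3) * (((j : ℤ) + k) + 2))
      * ((2 * (j : ℤ) + 2) * (2 * j + 3)) * (catalan (2 * j) : ℤ)) * hk

/-- Even-index Catalan convolution. -/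
private def S (m : ℕ) : ℤ := ∑ j ∈ range (m + 1), (catalan (2 * j) : ℤ) * catalan (2 * (m - j))

private lemma S_rec (n : ℕ) : ((n : ℤ) + 2) * S (n + 1) = 8 * (2 * n + 1) * S n := by
  set H : ℕ → ℤ := fun j => Pz n j * (catalan (2 * j) * catalan (2 * (n + 1 - j))) with hH
  have key : ∀ j ∈ range (n + 1),
      H (j + 1) - H j
        = (((n : ℤ) + 1) * (2 * (n : ℤ) + 3) * ((n : ℤ) + 2))
            * ((catalan (2 * j) : ℤ) * catalan (2 * (n + 1 - j)))
          - (((n : ℤ) + 1) * (2 * (n : ℤ) + 3) * (8 * (2 * (n : ℤ) + 1)))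
            * ((catalan (2 * j) : ℤ) * catalan (2 * (n - j))) := by
    intro j hj
    rw [mem_range] at hj
    have hjn : j ≤ n := Nat.lt_succ_iff.mp hj
    obtain ⟨k, hk⟩ : ∃ k, n = j + k := ⟨n - j, by omega⟩
    subst hk
    have e1 : j + k + 1 - j = k + 1 := by omega
    have e2 : j + k - j = k := by omega
    have e3 : j + k + 1 - (j + 1) = k := by omega
    have e4 : 2 * (k + 1) = 2 * k + 2 := by ring
    have e5 : 2 * (j + 1) = 2 * j + 2 := by ring
    simp only [hH, e1, e2, e3, e4, e5]
    have := step j k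
    push_cast at this ⊢
    linear_combination this
  have tele : ∑ j ∈ range (n + 1), (H (j + 1) - H j) = H (n + 1) - H 0 :=
    Finset.sum_range_sub H (n + 1)
  have h0 : H 0 = 0 := by simp [hH, Pz]
  have hHn1 : H (n + 1) = -(((n : ℤ) + 1) * ((n : ℤ) + 2) * (2 * (n : ℤ) + 3)
      * catalan (2 * (n + 1))) := by
    simp only [hH, Pz]
    have : n + 1 - (n + 1) = 0 := by omega
    rw [this]
    norm_num
    ring
  have expand : ∑ j ∈ range (n + 1), (H (j + 1) - H j)
      = (((n : ℤ) + 1) * (2 * (n : ℤ) + 3) * ((n : ℤ) + 2))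
          * (∑ j ∈ range (n + 1), (catalan (2 * j) : ℤ) * catalan (2 * (n + 1 - j)))
        - (((n : ℤ) + 1) * (2 * (n : ℤ) + 3) * (8 * (2 * (n : ℤ) + 1))) * S n := by
    rw [Finset.sum_congr rfl key, Finset.sum_sub_distrib, ← Finset.mul_sum, ← Finset.mul_sum]
    rfl
  have hsplit : S (n + 1)
      = (∑ j ∈ range (n + 1), (catalan (2 * j) : ℤ) * catalan (2 * (n + 1 - j)))
        + (catalan (2 * (n + 1)) : ℤ) := by
    rw [S, Finset.sum_range_succ]
    simp
  have hc : (((n : ℤ) + 1) * (2 * (n : ℤ) + 3)) ≠ 0 := by positivity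
  apply mul_left_cancel₀ hc
  rw [hsplit]
  rw [tele, h0, hHn1] at expand
  linear_combination (-1 : ℤ) * expand
  
private lemma S_eq (n : ℕ) : S n = 4 ^ n * catalan n := by
  induction n with
  | zero => simp [S]
  | succ n ih =>
    have h1 := S_rec n
    have h2 := cat_rec n
    have hc : ((n : ℤ) + 2) ≠ 0 := by positivity
    apply mul_left_cancel₀ hc
    rw [h1, ih]
    linear_combination (-(4 : ℤ) ^ n * 4) * h2

/-- Parity split of a range sum. -/
private lemma parity_split (f : ℕ → ℤ) (N : ℕ) :
    ∑ k ∈ range (2 * N + 1), f k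
      = ∑ j ∈ range (N + 1), f (2 * j) + ∑ j ∈ range N, f (2 * j + 1) := by
  induction N with
  | zero => simp
  | succ N ih =>
    have e : 2 * (N + 1) + 1 = (2 * N + 1) + 1 + 1 := by ring
    rw [e, Finset.sum_range_succ, Finset.sum_range_succ, ih,
      Finset.sum_range_succ (fun j => f (2 * j)) (N + 1),
      Finset.sum_range_succ (fun j => f (2 * j + 1)) N]
    have e1 : 2 * N + 1 + 1 = 2 * (N + 1) := by ring
    rw [e1]
    ring

/-- Odd-index Catalan convolution. -/
private lemma odd_conv (m : ℕ) :
    ∑ j ∈ range (m + 1), (catalan (2 * j + 1) : ℤ) * catalan (2 * (m - j) + 1)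
      = catalan (2 * m + 3) - 4 ^ (m + 1) * catalan (m + 1) := by
  have hfull : (catalan (2 * m + 3) : ℤ)
      = ∑ k ∈ range (2 * m + 3), (catalan k : ℤ) * catalan (2 * m + 2 - k) := by
    have : catalan (2 * m + 2 + 1)
        = ∑ i : Fin (2 * m + 2 + 1), catalan i * catalan (2 * m + 2 - i) :=
      catalan_succ (2 * m + 2)
    rw [Fin.sum_univ_eq_sum_range (fun i => catalan i * catalan (2 * m + 2 - i))] at this
    have e : 2 * m + 2 + 1 = 2 * m + 3 := by ring
    rw [e] at this
    exact_mod_cast congrArg (Nat.cast : ℕ → ℤ) this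
  have e2 : 2 * m + 3 = 2 * (m + 1) + 1 := by ring
  rw [e2] at hfull
  rw [parity_split (fun k => (catalan k : ℤ) * catalan (2 * m + 2 - k)) (m + 1)] at hfull
  have heven : ∑ j ∈ range (m + 1 + 1), (catalan (2 * j) : ℤ) * catalan (2 * m + 2 - 2 * j)
      = S (m + 1) := by
    rw [S]
    refine Finset.sum_congr rfl fun j hj => ?_
    rw [mem_range] at hj
    have : 2 * m + 2 - 2 * j = 2 * (m + 1 - j) := by omega
    rw [this]
  have hodd : ∑ j ∈ range (m + 1), (catalan (2 * j + 1) : ℤ) * catalan (2 * m + 2 - (2 * j + 1))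
      = ∑ j ∈ range (m + 1), (catalan (2 * j + 1) : ℤ) * catalan (2 * (m - j) + 1) := by
    refine Finset.sum_congr rfl fun j hj => ?_
    rw [mem_range] at hj
    have : 2 * m + 2 - (2 * j + 1) = 2 * (m - j) + 1 := by omega
    rw [this]
  rw [heven, hodd, S_eq] at hfull
  have e3 : (2 * (m + 1) + 1) = 2 * m + 3 := by ring
  rw [e3] at hfull
  linarith [hfull]

theorem catalan_avoid_odd01 (n : ℕ) (hn : 2 ≤ n) :
    (catalan (2 * n - 1) : ℤ) -
        ∑ i ∈ Finset.Icc 2 n, (catalan (2 * n - 2 * i + 1) : ℤ) * 2 * catalan (2 * i - 3) =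
      2 ^ (2 * n - 1) * catalan (n - 1) - catalan (2 * n - 1) := by
  obtain ⟨m, rfl⟩ : ∃ m, n = m + 2 := ⟨n - 2, by omega⟩
  have hsum : ∑ i ∈ Finset.Icc 2 (m + 2),
      (catalan (2 * (m + 2) - 2 * i + 1) : ℤ) * 2 * catalan (2 * i - 3)
      = ∑ j ∈ range (m + 1), (catalan (2 * (m - j) + 1) : ℤ) * 2 * catalan (2 * j + 1) := by
    rw [show Finset.Icc 2 (m + 2) = Finset.map ⟨fun j => j + 2, add_left_injective 2⟩
        (range (m + 1)) from ?_]
    · rw [Finset.sum_map]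
      refine Finset.sum_congr rfl fun j hj => ?_
      rw [mem_range] at hj
      have e1 : 2 * (m + 2) - 2 * (j + 2) + 1 = 2 * (m - j) + 1 := by omega
      have e2 : 2 * (j + 2) - 3 = 2 * j + 1 := by omega
      simp only [Function.Embedding.coeFn_mk, e1, e2]
    · ext x
      simp only [Finset.mem_Icc, Finset.mem_map, mem_range, Function.Embedding.coeFn_mk]
      constructor
      · rintro ⟨h1, h2⟩; exact ⟨x - 2, by omega, by omega⟩
      · rintro ⟨a, ha, rfl⟩; omega
  rw [hsum]
  have hconv : ∑ j ∈ range (m + 1), (catalan (2 * (m - j) + 1) : ℤ) * 2 * catalan (2 * j + 1)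
      = 2 * (catalan (2 * m + 3) - 4 ^ (m + 1) * catalan (m + 1)) := by
    rw [← odd_conv m]
    rw [Finset.mul_sum]
    rw [Finset.sum_nbij' (fun j => m - j) (fun j => m - j)]
    · intro a ha; rw [mem_range] at ha ⊢; omega
    · intro a ha; rw [mem_range] at ha ⊢; omega
    · intro a ha; rw [mem_range] at ha; omega
    · intro a ha; rw [mem_range] at ha; omega
    · intro a ha
      rw [mem_range] at ha
      have : m - (m - a) = a := by omega
      rw [this]
      ring
  rw [hconv]
  have e1 : 2 * (m + 2) - 1 = 2 * m + 3 := by omega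
  have e2 : m + 2 - 1 = m + 1 := by omega
  rw [e1, e2]
  have e3 : (2 : ℤ) ^ (2 * m + 3) = 2 * 4 ^ (m + 1) := by
    rw [pow_add, pow_mul, pow_succ]; norm_num; ring
  rw [e3]
  ring
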